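/- In Nelson's paraconsistent first-order logic N4 with identity, the formula ¬Ix[F,G] derives the formula ∀x(¬F ∨ ∃y(F[x:=y] ∧ ¬ y=x) ∨ ¬G), where Ix[F,G] is the binary definite-description quantifier governed by the rules (II), (¬IE), (IE₁), (IE₂), (¬II₁), (¬II₂), (¬II₃). -/

import Mathlib

/-- First-order terms: variables and constants. -/
inductive Tm where
  | var : ℕ → Tm
  | const : ℕ → Tm

/-- Formulas of Nelson's language with strong negation and the binary
definite-description quantifier `iq x F G` (i.e. `Ix[F,G]`).
Identity is the distinguished predicate symbol `0` (see `eqf`). -/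
inductive Form (P : Type) where
  | atom : P → List Tm → Form P
  | imp : Form P → Form P → Form P
  | and : Form P → Form P → Form P
  | or  : Form P → Form P → Form P
  | neg : Form P → Form P
  | all : ℕ → Form P → Form P
  | ex  : ℕ → Form P → Form P
  | iq  : ℕ → Form P → Form P → Form P

/-- The identity predicate: `t = u`. -/
def eqf {P : Type} (e : P) (t u : Tm) : Form P := .atom e [t, u]

def Tm.subst (x : ℕ) (t : Tm) : Tm → Tm
  | .var y => if y = x then t else .var y
  | .const c => .const c

/-- Substitution `A[x := t]` (substituting `t` for the free occurrences of `x`). -/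
def Form.subst {P : Type} (x : ℕ) (t : Tm) : Form P → Form P
  | .atom p ts => .atom p (ts.map (Tm.subst x t))
  | .imp A B => .imp (A.subst x t) (B.subst x t)
  | .and A B => .and (A.subst x t) (B.subst x t)
  | .or A B => .or (A.subst x t) (B.subst x t)
  | .neg A => .neg (A.subst x t)
  | .all y A => if y = x then .all y A else .all y (A.subst x t)
  | .ex y A => if y = x then .ex y A else .ex y (A.subst x t)
  | .iq y F G => if y = x then .iq y F G else .iq y (F.subst x t) (G.subst x t)

def Tm.fv : Tm → Set ℕ
  | .var y => {y}
  | .const _ => ∅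

/-- Free variables of a formula. -/
def Form.fv {P : Type} : Form P → Set ℕ
  | .atom _ ts => {y | ∃ t ∈ ts, y ∈ t.fv}
  | .imp A B => A.fv ∪ B.fv
  | .and A B => A.fv ∪ B.fv
  | .or A B => A.fv ∪ B.fv
  | .neg A => A.fv
  | .all y A => A.fv \ {y}
  | .ex y A => A.fv \ {y}
  | .iq y F G => (F.fv ∪ G.fv) \ {y}

/-- Bound variables of a formula. -/
def Form.bv {P : Type} : Form P → Set ℕ
  | .atom _ _ => ∅
  | .imp A B => A.bv ∪ B.bv
  | .and A B => A.bv ∪ B.bv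
  | .or A B => A.bv ∪ B.bv
  | .neg A => A.bv
  | .all y A => insert y A.bv
  | .ex y A => insert y A.bv
  | .iq y F G => insert y (F.bv ∪ G.bv)

/-- `t` is free for `x` in `A` (sufficient condition: no variable of `t` is bound in `A`). -/
def FreeFor {P : Type} (t : Tm) (A : Form P) : Prop := ∀ v ∈ t.fv, v ∉ A.bv

/-- Atomic formulas and their negations (for the `=E` rule). -/
def IsBasic {P : Type} : Form P → Prop
  | .atom _ _ => True
  | .neg (.atom _ _) => True
  | _ => False

/-- Natural deduction for Nelson's paraconsistent first-order logic N4 with identity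
(`eqp` is the identity predicate), extended by Kürbis' rules for the binary
definite-description quantifier `I` (ordinary, non-free versions of the rules). -/
inductive N4 {P : Type} (eqp : P) : Set (Form P) → Form P → Prop where
  | hyp {Γ : Set (Form P)} {A : Form P} : A ∈ Γ → N4 eqp Γ A
  | andI {Γ : Set (Form P)} {A B : Form P} : N4 eqp Γ A → N4 eqp Γ B → N4 eqp Γ (A.and B)
  | andE1 {Γ : Set (Form P)} {A B : Form P} : N4 eqp Γ (A.and B) → N4 eqp Γ A
  | andE2 {Γ : Set (Form P)} {A B : Form P} : N4 eqp Γ (A.and B) → N4 eqp Γ B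
  | orI1 {Γ : Set (Form P)} {A B : Form P} : N4 eqp Γ A → N4 eqp Γ (A.or B)
  | orI2 {Γ : Set (Form P)} {A B : Form P} : N4 eqp Γ B → N4 eqp Γ (A.or B)
  | orE {Γ : Set (Form P)} {A B C : Form P} : N4 eqp Γ (A.or B) → N4 eqp (insert A Γ) C → N4 eqp (insert B Γ) C →
      N4 eqp Γ C
  | impI {Γ : Set (Form P)} {A B : Form P} : N4 eqp (insert A Γ) B → N4 eqp Γ (A.imp B)
  | impE {Γ : Set (Form P)} {A B : Form P} : N4 eqp Γ (A.imp B) → N4 eqp Γ A → N4 eqp Γ B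
  | negnegI {Γ : Set (Form P)} {A : Form P} : N4 eqp Γ A → N4 eqp Γ A.neg.neg
  | negnegE {Γ : Set (Form P)} {A : Form P} : N4 eqp Γ A.neg.neg → N4 eqp Γ A
  | negimpI {Γ : Set (Form P)} {A B : Form P} : N4 eqp Γ A → N4 eqp Γ B.neg → N4 eqp Γ (A.imp B).neg
  | negimpE1 {Γ : Set (Form P)} {A B : Form P} : N4 eqp Γ (A.imp B).neg → N4 eqp Γ A
  | negimpE2 {Γ : Set (Form P)} {A B : Form P} : N4 eqp Γ (A.imp B).neg → N4 eqp Γ B.neg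
  | negorI {Γ : Set (Form P)} {A B : Form P} : N4 eqp Γ A.neg → N4 eqp Γ B.neg → N4 eqp Γ (A.or B).neg
  | negorE1 {Γ : Set (Form P)} {A B : Form P} : N4 eqp Γ (A.or B).neg → N4 eqp Γ A.neg
  | negorE2 {Γ : Set (Form P)} {A B : Form P} : N4 eqp Γ (A.or B).neg → N4 eqp Γ B.neg
  | negandI1 {Γ : Set (Form P)} {A B : Form P} : N4 eqp Γ A.neg → N4 eqp Γ (A.and B).neg
  | negandI2 {Γ : Set (Form P)} {A B : Form P} : N4 eqp Γ B.neg → N4 eqp Γ (A.and B).neg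
  | negandE {Γ : Set (Form P)} {A B C : Form P} : N4 eqp Γ (A.and B).neg → N4 eqp (insert A.neg Γ) C →
      N4 eqp (insert B.neg Γ) C → N4 eqp Γ C
  | allI {Γ : Set (Form P)} {A : Form P} {x y : ℕ} : N4 eqp Γ (A.subst x (.var y)) →
      (∀ B ∈ Γ, y ∉ B.fv) → (y = x ∨ y ∉ A.fv) → N4 eqp Γ (.all x A)
  | allE {Γ : Set (Form P)} {A : Form P} {x : ℕ} {t : Tm} : N4 eqp Γ (.all x A) → FreeFor t A → N4 eqp Γ (A.subst x t)
  | negallI {Γ : Set (Form P)} {A : Form P} {x : ℕ} {t : Tm} : N4 eqp Γ (A.subst x t).neg → FreeFor t A →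
      N4 eqp Γ (Form.all x A).neg
  | negallE {Γ : Set (Form P)} {A C : Form P} {x y : ℕ} : N4 eqp Γ (Form.all x A).neg →
      N4 eqp (insert (A.subst x (.var y)).neg Γ) C →
      y ∉ C.fv → (∀ B ∈ Γ, y ∉ B.fv) → (y = x ∨ y ∉ A.fv) → N4 eqp Γ C
  | exI {Γ : Set (Form P)} {A : Form P} {x : ℕ} {t : Tm} : N4 eqp Γ (A.subst x t) → FreeFor t A → N4 eqp Γ (.ex x A)
  | exE {Γ : Set (Form P)} {A C : Form P} {x y : ℕ} : N4 eqp Γ (.ex x A) → N4 eqp (insert (A.subst x (.var y)) Γ) C →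
      y ∉ C.fv → (∀ B ∈ Γ, y ∉ B.fv) → (y = x ∨ y ∉ A.fv) → N4 eqp Γ C
  | negexI {Γ : Set (Form P)} {A : Form P} {x y : ℕ} : N4 eqp Γ (A.subst x (.var y)).neg →
      (∀ B ∈ Γ, y ∉ B.fv) → (y = x ∨ y ∉ A.fv) → N4 eqp Γ (Form.ex x A).neg
  | negexE {Γ : Set (Form P)} {A : Form P} {x : ℕ} {t : Tm} : N4 eqp Γ (Form.ex x A).neg → FreeFor t A →
      N4 eqp Γ (A.subst x t).neg
  | eqI {Γ : Set (Form P)} {t : Tm} : N4 eqp Γ (eqf eqp t t)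
  | eqE {Γ : Set (Form P)} {A : Form P} {x : ℕ} {t₁ t₂ : Tm} : N4 eqp Γ (eqf eqp t₁ t₂) → N4 eqp Γ (A.subst x t₁) →
      IsBasic A → N4 eqp Γ (A.subst x t₂)
  -- rules for the binary quantifier I (ordinary versions)
  | iqI {Γ : Set (Form P)} {F G : Form P} {x y : ℕ} {t : Tm} : N4 eqp Γ (F.subst x t) → N4 eqp Γ (G.subst x t) →
      N4 eqp (insert (F.subst x (.var y)) Γ) (eqf eqp (.var y) t) →
      FreeFor t F → FreeFor t G → y ≠ x → y ∉ t.fv → (∀ B ∈ Γ, y ∉ B.fv) →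
      N4 eqp Γ (.iq x F G)
  | negiqE {Γ : Set (Form P)} {F G C : Form P} {x y : ℕ} {t : Tm} : N4 eqp Γ (Form.iq x F G).neg →
      N4 eqp (insert (F.subst x t).neg Γ) C →
      N4 eqp (insert (G.subst x t).neg Γ) C →
      N4 eqp (insert (Form.neg (eqf eqp (.var y) t)) (insert (F.subst x (.var y)) Γ)) C →
      FreeFor t F → FreeFor t G → y ≠ x → y ∉ t.fv → (∀ B ∈ Γ, y ∉ B.fv) → y ∉ C.fv →
      N4 eqp Γ C
  | iqE1 {Γ : Set (Form P)} {F G C : Form P} {x y : ℕ} : N4 eqp Γ (.iq x F G) →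
      N4 eqp (insert (G.subst x (.var y)) (insert (F.subst x (.var y)) Γ)) C →
      y ∉ C.fv → (∀ B ∈ Γ, y ∉ B.fv) → (y = x ∨ (y ∉ F.fv ∧ y ∉ G.fv)) →
      N4 eqp Γ C
  | iqE2 {Γ : Set (Form P)} {F G : Form P} {x : ℕ} {t₁ t₂ : Tm} : N4 eqp Γ (.iq x F G) →
      N4 eqp Γ (F.subst x t₁) → N4 eqp Γ (F.subst x t₂) →
      FreeFor t₁ F → FreeFor t₂ F → N4 eqp Γ (eqf eqp t₁ t₂)
  | negiqI1 {Γ : Set (Form P)} {F G : Form P} {x y : ℕ} : N4 eqp Γ (F.subst x (.var y)).neg →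
      (∀ B ∈ Γ, y ∉ B.fv) → (y = x ∨ (y ∉ F.fv ∧ y ∉ G.fv)) →
      N4 eqp Γ (Form.iq x F G).neg
  | negiqI2 {Γ : Set (Form P)} {F G : Form P} {x y : ℕ} : N4 eqp Γ (G.subst x (.var y)).neg →
      (∀ B ∈ Γ, y ∉ B.fv) → (y = x ∨ (y ∉ F.fv ∧ y ∉ G.fv)) →
      N4 eqp Γ (Form.iq x F G).neg
  | negiqI3 {Γ : Set (Form P)} {F G : Form P} {x : ℕ} {t₁ t₂ : Tm} : N4 eqp Γ (eqf eqp t₁ t₂).neg →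
      N4 eqp Γ (F.subst x t₁) → N4 eqp Γ (F.subst x t₂) →
      FreeFor t₁ F → FreeFor t₂ F → N4 eqp Γ (Form.iq x F G).neg

/-- The Nelsonian falsity condition of `Ix[F,G]`:
`∀x(¬F ∨ ∃y(F[x:=y] ∧ ¬ y=x) ∨ ¬G)`. -/
def negIqForm (x y : ℕ) (F G : Form ℕ) : Form ℕ :=
  .all x ((F.neg).or
    ((Form.ex y ((F.subst x (.var y)).and (Form.neg (eqf 0 (.var y) (.var x))))).or
      G.neg))

section Aux
variable {P : Type}

lemma Tm.fv_finite (t : Tm) : t.fv.Finite := by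
  cases t <;> simp [Tm.fv]

lemma Form.fv_finite (A : Form P) : A.fv.Finite := by
  induction A with
  | atom p ts =>
      have : Form.fv (Form.atom p ts) = ⋃ t ∈ ts, t.fv := by
        ext v; simp [Form.fv]
      rw [this]
      exact Set.Finite.biUnion (ts.finite_toSet) (fun t _ => t.fv_finite)
  | imp A B ihA ihB => exact ihA.union ihB
  | and A B ihA ihB => exact ihA.union ihB
  | or A B ihA ihB => exact ihA.union ihB
  | neg A ihA => exact ihA
  | all y A ihA => exact ihA.diff
  | ex y A ihA => exact ihA.diff
  | iq y F G ihF ihG => exact (ihF.union ihG).diff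

lemma Form.bv_finite (A : Form P) : A.bv.Finite := by
  induction A with
  | atom p ts => simp [Form.bv]
  | imp A B ihA ihB => exact ihA.union ihB
  | and A B ihA ihB => exact ihA.union ihB
  | or A B ihA ihB => exact ihA.union ihB
  | neg A ihA => exact ihA
  | all y A ihA => exact ihA.insert y
  | ex y A ihA => exact ihA.insert y
  | iq y F G ihF ihG => exact (ihF.union ihG).insert y

lemma Form.bv_subst (x : ℕ) (t : Tm) (A : Form P) : (A.subst x t).bv = A.bv := by
  induction A with
  | atom p ts => simp [Form.subst, Form.bv]
  | imp A B ihA ihB => simp [Form.subst, Form.bv, ihA, ihB]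
  | and A B ihA ihB => simp [Form.subst, Form.bv, ihA, ihB]
  | or A B ihA ihB => simp [Form.subst, Form.bv, ihA, ihB]
  | neg A ihA => simp [Form.subst, Form.bv, ihA]
  | all y A ihA => by_cases h : y = x <;> simp [Form.subst, h, Form.bv, ihA]
  | ex y A ihA => by_cases h : y = x <;> simp [Form.subst, h, Form.bv, ihA]
  | iq y F G ihF ihG => by_cases h : y = x <;> simp [Form.subst, h, Form.bv, ihF, ihG]

lemma Tm.mem_fv_subst {v x : ℕ} {t u : Tm} (h : v ∈ (Tm.subst x t u).fv) :
    (v ∈ u.fv ∧ v ≠ x) ∨ v ∈ t.fv := by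
  cases u with
  | var z =>
      by_cases hz : z = x
      · simp [Tm.subst, hz] at h; tauto
      · simp [Tm.subst, hz, Tm.fv] at h ⊢
        subst h; tauto
  | const c => simp [Tm.subst, Tm.fv] at h

lemma Form.mem_fv_subst {v x : ℕ} {t : Tm} {A : Form P}
    (h : v ∈ (A.subst x t).fv) : (v ∈ A.fv ∧ v ≠ x) ∨ v ∈ t.fv := by
  induction A with
  | atom p ts =>
      simp [Form.subst, Form.fv] at h ⊢
      obtain ⟨u, hu, hv⟩ := h
      rcases Tm.mem_fv_subst hv with ⟨h1, h2⟩ | h1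
      · exact Or.inl ⟨⟨u, hu, h1⟩, h2⟩
      · exact Or.inr h1
  | imp A B ihA ihB => simp [Form.subst, Form.fv] at h ⊢; tauto
  | and A B ihA ihB => simp [Form.subst, Form.fv] at h ⊢; tauto
  | or A B ihA ihB => simp [Form.subst, Form.fv] at h ⊢; tauto
  | neg A ihA => simp [Form.subst, Form.fv] at h ⊢; tauto
  | all z A ihA =>
      by_cases hz : z = x
      · subst hz
        simp [Form.subst, Form.fv] at h ⊢
        tauto
      · simp [Form.subst, hz, Form.fv] at h ⊢
        obtain ⟨h1, h2⟩ := h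
        rcases ihA h1 with ⟨h3, h4⟩ | h3 <;> tauto
  | ex z A ihA =>
      by_cases hz : z = x
      · subst hz
        simp [Form.subst, Form.fv] at h ⊢
        tauto
      · simp [Form.subst, hz, Form.fv] at h ⊢
        obtain ⟨h1, h2⟩ := h
        rcases ihA h1 with ⟨h3, h4⟩ | h3 <;> tauto
  | iq z F G ihF ihG =>
      by_cases hz : z = x
      · subst hz
        simp [Form.subst, Form.fv] at h ⊢
        tauto
      · simp [Form.subst, hz, Form.fv] at h ⊢
        obtain ⟨h1, h2⟩ := h
        rcases h1 with h1 | h1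
        · rcases ihF h1 with ⟨h3, h4⟩ | h3 <;> tauto
        · rcases ihG h1 with ⟨h3, h4⟩ | h3 <;> tauto

lemma Tm.subst_var_self (x : ℕ) (u : Tm) : Tm.subst x (.var x) u = u := by
  cases u with
  | var z => by_cases h : z = x <;> simp [Tm.subst, h]
  | const c => simp [Tm.subst]

lemma Form.subst_var_self (x : ℕ) (A : Form P) : A.subst x (.var x) = A := by
  have hid : Tm.subst x (Tm.var x) = id := funext (Tm.subst_var_self x)
  induction A with
  | atom p ts => simp [Form.subst, hid]
  | imp A B ihA ihB => simp [Form.subst, ihA, ihB]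
  | and A B ihA ihB => simp [Form.subst, ihA, ihB]
  | or A B ihA ihB => simp [Form.subst, ihA, ihB]
  | neg A ihA => simp [Form.subst, ihA]
  | all z A ihA => by_cases h : z = x <;> simp [Form.subst, h, ihA]
  | ex z A ihA => by_cases h : z = x <;> simp [Form.subst, h, ihA]
  | iq z F G ihF ihG => by_cases h : z = x <;> simp [Form.subst, h, ihF, ihG]

lemma Tm.subst_of_not_mem {x : ℕ} {u : Tm} (h : x ∉ u.fv) (t : Tm) :
    Tm.subst x t u = u := by
  cases u with
  | var z =>
      simp [Tm.fv] at h
      simp [Tm.subst, Ne.symm h]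
  | const c => simp [Tm.subst]

lemma Form.subst_of_not_mem {x : ℕ} {A : Form P} (h : x ∉ A.fv) (t : Tm) :
    A.subst x t = A := by
  induction A with
  | atom p ts =>
      simp [Form.fv] at h
      simp only [Form.subst, Form.atom.injEq, true_and]
      have : ts.map (Tm.subst x t) = ts.map id :=
        List.map_congr_left (fun u hu => Tm.subst_of_not_mem (h u hu) t)
      simpa using this
  | imp A B ihA ihB =>
      simp [Form.fv] at h
      simp [Form.subst, ihA h.1, ihB h.2]
  | and A B ihA ihB =>
      simp [Form.fv] at h
      simp [Form.subst, ihA h.1, ihB h.2]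
  | or A B ihA ihB =>
      simp [Form.fv] at h
      simp [Form.subst, ihA h.1, ihB h.2]
  | neg A ihA =>
      simp [Form.fv] at h
      simp [Form.subst, ihA h]
  | all z A ihA =>
      by_cases hz : z = x
      · simp [Form.subst, hz]
      · simp [Form.fv] at h
        have : x ∉ A.fv := fun hx => hz ((h hx).symm)
        simp [Form.subst, hz, ihA this]
  | ex z A ihA =>
      by_cases hz : z = x
      · simp [Form.subst, hz]
      · simp [Form.fv] at h
        have : x ∉ A.fv := fun hx => hz ((h hx).symm)
        simp [Form.subst, hz, ihA this]
  | iq z F G ihF ihG =>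
      by_cases hz : z = x
      · simp [Form.subst, hz]
      · simp [Form.fv] at h
        have hF : x ∉ F.fv := fun hx => hz ((h (Or.inl hx)).symm)
        have hG : x ∉ G.fv := fun hx => hz ((h (Or.inr hx)).symm)
        simp [Form.subst, hz, ihF hF, ihG hG]

end Aux
/-- In Nelson's paraconsistent first-order logic N4 with identity,
`¬Ix[F,G] ⊢ ∀x(¬F ∨ ∃y(F[x:=y] ∧ ¬ y=x) ∨ ¬G)`, where `y` is a fresh variable. -/
theorem negIq_derives_quantified (x y : ℕ) (F G : Form ℕ)
    (hyx : y ≠ x) (hyF : y ∉ F.fv) (hyFb : y ∉ F.bv) (hyG : y ∉ G.fv) :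
    N4 0 {(Form.iq x F G).neg} (negIqForm x y F G) := by
  classical
  -- choose a fresh variable z
  obtain ⟨z, hz⟩ :=
    (((((F.fv_finite.union G.fv_finite).union (F.bv_finite.union G.bv_finite)).union
      (Set.finite_singleton x)).union (Set.finite_singleton y)).infinite_compl).nonempty
  simp only [Set.mem_compl_iff, Set.mem_union, Set.mem_singleton_iff, not_or] at hz
  obtain ⟨⟨⟨⟨hzF, hzG⟩, hzFb, hzGb⟩, hzx⟩, hzy⟩ := hz
  -- abbreviations
  set Γ : Set (Form ℕ) := {(Form.iq x F G).neg} with hΓ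
  -- fv facts
  have hxFy : x ∉ (F.subst x (.var y)).fv := by
    intro hx
    rcases Form.mem_fv_subst hx with ⟨_, h⟩ | h
    · exact h rfl
    · simp [Tm.fv] at h; exact hyx h.symm
  have hyFz : y ∉ (F.subst x (.var z)).fv := by
    intro h
    rcases Form.mem_fv_subst h with ⟨h1, _⟩ | h1
    · exact hyF h1
    · simp [Tm.fv] at h1; exact hzy h1.symm
  have hyGz : y ∉ (G.subst x (.var z)).fv := by
    intro h
    rcases Form.mem_fv_subst h with ⟨h1, _⟩ | h1
    · exact hyG h1
    · simp [Tm.fv] at h1; exact hzy h1.symm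
  have hzFy : z ∉ (F.subst x (.var y)).fv := by
    intro h
    rcases Form.mem_fv_subst h with ⟨h1, _⟩ | h1
    · exact hzF h1
    · simp [Tm.fv] at h1; exact hzy h1
  have hΓy : ∀ B ∈ Γ, y ∉ B.fv := by
    intro B hB
    simp [hΓ] at hB; subst hB
    simp [Form.fv]
    tauto
  have hΓz : ∀ B ∈ Γ, z ∉ B.fv := by
    intro B hB
    simp [hΓ] at hB; subst hB
    simp [Form.fv]
    tauto
  -- the body of the universal
  set D : Form ℕ := (F.neg).or
    ((Form.ex y ((F.subst x (.var y)).and (Form.neg (eqf 0 (.var y) (.var x))))).or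
      G.neg) with hD
  set C : Form ℕ := ((F.subst x (.var z)).neg).or
    ((Form.ex y ((F.subst x (.var y)).and (Form.neg (eqf 0 (.var y) (.var z))))).or
      ((G.subst x (.var z)).neg)) with hC
  have hDsub : D.subst x (.var z) = C := by
    simp [hD, hC, Form.subst, eqf, hyx, Tm.subst, Form.subst_of_not_mem hxFy]
  have hzD : z ∉ D.fv := by
    simp [hD, Form.fv, eqf, Tm.fv]
    refine ⟨hzF, ?_, hzG⟩
    intro h
    rcases h with h | h | h
    · exact absurd h hzFy
    · exact h
    · exact absurd h hzx
  have hyC : y ∉ C.fv := by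
    simp [hC, Form.fv, eqf, Tm.fv]
    exact ⟨hyFz, hyGz⟩
  show N4 0 Γ (.all x D)
  apply N4.allI (y := z) _ hΓz (Or.inr hzD)
  rw [hDsub]
  -- derive C from ¬Ix[F,G] by ¬IE with t := z
  apply N4.negiqE (F := F) (G := G) (x := x) (y := y) (t := .var z)
    (N4.hyp (by simp [hΓ])) ?_ ?_ ?_ ?_ ?_ hyx ?_ hΓy hyC
  · -- from ¬F[x:=z]
    exact N4.orI1 (N4.hyp (Set.mem_insert _ _))
  · -- from ¬G[x:=z]
    exact N4.orI2 (N4.orI2 (N4.hyp (Set.mem_insert _ _)))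
  · -- from F[x:=y] and ¬ y = z
    apply N4.orI2
    apply N4.orI1
    refine N4.exI (t := .var y) ?_ ?_
    · rw [Form.subst_var_self]
      exact N4.andI (N4.hyp (Set.mem_insert_of_mem _ (Set.mem_insert _ _)))
        (N4.hyp (Set.mem_insert _ _))
    · intro v hv
      simp [Tm.fv] at hv; subst hv
      simp [Form.bv, Form.bv_subst, eqf]
      exact hyFb
  · -- FreeFor z F
    intro v hv
    simp [Tm.fv] at hv; subst hv
    exact hzFb
  · -- FreeFor z G
    intro v hv
    simp [Tm.fv] at hv; subst hv
    exact hzGb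
  · -- y ∉ fv z
    simp [Tm.fv]
    exact fun h => hzy h.symm
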